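/- Let V be an n-dimensional real vector space, P : V → V a projection with (n−1)-dimensional image U, and B : V → V a linear operator such that for every symmetric bilinear form b on V satisfying b(x,y) = b(P(x), P(y)) for all x, y, the operator P∘B∘P is b-symmetric (b(PBP(x), y) = b(x, PBP(y)) for all x, y). If n ≥ 3, then P∘B∘P = λ·P where λ = tr(B∘P)/(n−1). -/

import Mathlib

/-- If `P` is a projector of rank `n−1` (`n = dim V ≥ 3`) and `P∘B∘P` is
symmetric w.r.t. every symmetric bilinear form `b` factoring through `P`, then
`P∘B∘P = λ·P` with `λ = tr(B∘P)/(n−1)`. -/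
theorem PBP_eq_smul_P
    {V : Type*} [AddCommGroup V] [Module ℝ V] [FiniteDimensional ℝ V]
    (hn : 3 ≤ Module.finrank ℝ V)
    (P B : V →ₗ[ℝ] V)
    (hP : P ∘ₗ P = P)
    (hrank : Module.finrank ℝ (LinearMap.range P) = Module.finrank ℝ V - 1)
    (hB : ∀ b : LinearMap.BilinForm ℝ V, b.IsSymm →
      (∀ x y, b x y = b (P x) (P y)) →
      ∀ x y, b ((P ∘ₗ B ∘ₗ P) x) y = b x ((P ∘ₗ B ∘ₗ P) y)) :
    P ∘ₗ B ∘ₗ P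
      = (LinearMap.trace ℝ V (B ∘ₗ P) / ((Module.finrank ℝ V : ℝ) - 1)) • P := by
  set T : V →ₗ[ℝ] V := P ∘ₗ B ∘ₗ P with hT
  have hPP : ∀ x, P (P x) = P x := fun x => congrArg (· x) hP
  have hTx : ∀ x, T x = P (B (P x)) := fun x => rfl
  have hPT : ∀ x, P (T x) = T x := fun x => by rw [hTx, hPP]
  -- Step A: the key identity from rank-one symmetric forms
  have stepA : ∀ (f : V →ₗ[ℝ] ℝ) x y, f (T x) * f (P y) = f (P x) * f (T y) := by
    intro f x y
    set b : LinearMap.BilinForm ℝ V :=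
      (LinearMap.mul ℝ ℝ).compl₁₂ (f ∘ₗ P) (f ∘ₗ P) with hb
    have hbval : ∀ u v, b u v = f (P u) * f (P v) := fun u v => rfl
    have hsymm : b.IsSymm := by
      rw [LinearMap.BilinForm.isSymm_def]; intro u v
      simp [hbval, mul_comm]
    have hfac : ∀ u v, b u v = b (P u) (P v) := by
      intro u v; simp [hbval, hPP]
    have := hB b hsymm hfac x y
    simpa [hbval, hPP, hPT] using this
  -- Step B: functionals vanishing on P x vanish on T x
  have stepB : ∀ (x : V) (f : V →ₗ[ℝ] ℝ), f (P x) = 0 → f (T x) = 0 := by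
    intro x f hfx
    by_cases hfP : ∀ y, f (P y) = 0
    · rw [hTx, ← hPP (B (P x))]
      exact hfP _
    · push_neg at hfP
      obtain ⟨y, hy⟩ := hfP
      have := stepA f x y
      rw [hfx, zero_mul] at this
      exact (mul_eq_zero.mp this).resolve_right hy
  -- Step C: T x ∈ span {P x}
  have stepC : ∀ x : V, ∃ c : ℝ, T x = c • P x := by
    intro x
    have hmem : T x ∈ Submodule.span ℝ {P x} := by
      by_contra hmem
      obtain ⟨f, hf1, hf2⟩ :=
        Submodule.exists_dual_map_eq_bot_of_notMem hmem inferInstance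
      have hfPx : f (P x) = 0 := by
        have : f (P x) ∈ Submodule.map f (Submodule.span ℝ {P x}) :=
          Submodule.mem_map_of_mem (Submodule.mem_span_singleton_self _)
        rw [hf2] at this
        simpa using this
      exact hf1 (stepB x f hfPx)
    obtain ⟨c, hc⟩ := Submodule.mem_span_singleton.mp hmem
    exact ⟨c, hc.symm⟩
  -- P ≠ 0 : pick x₀ with P x₀ ≠ 0
  have hrank2 : 2 ≤ Module.finrank ℝ (LinearMap.range P) := by omega
  have hx0 : ∃ x₀ : V, P x₀ ≠ 0 := by
    by_contra h
    push_neg at h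
    have : P = 0 := LinearMap.ext fun x => h x
    rw [this, LinearMap.range_zero] at hrank2
    rw [finrank_bot ℝ V] at hrank2
    omega
  obtain ⟨x₀, hx₀⟩ := hx0
  obtain ⟨lam, hlam⟩ := stepC x₀
  -- Step D: T x = lam • P x for all x
  have stepD : ∀ x, T x = lam • P x := by
    intro x
    by_cases hdep : ∃ a : ℝ, P x = a • P x₀
    · obtain ⟨a, ha⟩ := hdep
      have : T x = a • T x₀ := by
        rw [hTx, hTx, ha, map_smul, map_smul]
      rw [this, hlam, ha, smul_smul, smul_smul, mul_comm]
    · push_neg at hdep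
      obtain ⟨c, hc⟩ := stepC x
      obtain ⟨c', hc'⟩ := stepC (x + x₀)
      have hsum : c • P x + lam • P x₀ = c' • P x + c' • P x₀ := by
        have : T (x + x₀) = T x + T x₀ := map_add _ _ _
        rw [hc', hc, hlam, map_add, smul_add] at this
        linear_combination (norm := module) this.symm
      have hkey : (c - c') • P x = (c' - lam) • P x₀ := by
        linear_combination (norm := module) hsum
      have hcc' : c = c' := by
        by_contra hne
        have h2 : P x = (c - c')⁻¹ • ((c - c') • P x) := by
          rw [smul_smul, inv_mul_cancel₀ (sub_ne_zero.mpr hne), one_smul]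
        have : P x = ((c' - lam) / (c - c')) • P x₀ := by
          rw [h2, hkey, smul_smul, div_eq_inv_mul, mul_comm]
        exact hdep _ this
      have hc'lam : c' = lam := by
        rw [hcc', sub_self, zero_smul] at hkey
        have := hkey.symm
        rcases smul_eq_zero.mp this with h | h
        · linarith [sub_eq_zero.mp (by linarith [h] : c' - lam = 0)]
        · exact absurd h hx₀
      rw [hc, hcc', hc'lam]
  -- So T = lam • P
  have hTP : T = lam • P := LinearMap.ext fun x => by rw [stepD]; rfl
  -- trace computation
  have hproj : LinearMap.IsProj (LinearMap.range P) P := by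
    constructor
    · intro x; exact LinearMap.mem_range_self P x
    · rintro x ⟨y, rfl⟩; exact hPP y
  have htrP : LinearMap.trace ℝ V P = (Module.finrank ℝ (LinearMap.range P) : ℝ) :=
    hproj.trace
  have htr : LinearMap.trace ℝ V (B ∘ₗ P) = lam * (Module.finrank ℝ (LinearMap.range P) : ℝ) := by
    have h1 : LinearMap.trace ℝ V T = LinearMap.trace ℝ V (B ∘ₗ P) := by
      rw [hT, LinearMap.trace_comp_comm', LinearMap.comp_assoc, hP]
    rw [← h1, hTP, map_smul, htrP, smul_eq_mul]
  have hcast : (Module.finrank ℝ (LinearMap.range P) : ℝ)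
      = (Module.finrank ℝ V : ℝ) - 1 := by
    rw [hrank, Nat.cast_sub (by omega)]
    simp
  have hne : (Module.finrank ℝ V : ℝ) - 1 ≠ 0 := by
    rw [← hcast, hrank]
    have : (1:ℝ) ≤ (Module.finrank ℝ V - 1 : ℕ) := by
      exact_mod_cast Nat.one_le_iff_ne_zero.mpr (by omega)
    positivity
  have hlamval : LinearMap.trace ℝ V (B ∘ₗ P) / ((Module.finrank ℝ V : ℝ) - 1) = lam := by
    rw [htr, hcast, mul_div_assoc, div_self hne, mul_one]
  rw [hlamval, ← hTP, hT]
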